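/- Let χ : ℝ → ℝ be twice continuously differentiable, supported in [−1,1], with χ = 1 on [−1/2,1/2] and 0 ≤ χ ≤ 1. Then there exists a constant C > 0, depending only on χ, such that for every A > 0, every twice continuously differentiable b : (0,∞) → ℂ satisfying |b(λ)| ≤ A, |b′(λ)| ≤ A·λ^{−1}, |b″(λ)| ≤ A·λ^{−2} for all λ > 0, and every s ∈ ℝ, one has |∫₀^∞ e^{iλs}·λ·χ(λ)·b(λ) dλ| ≤ C·A·(1+|s|)^{−3/2}. -/

import Mathlib

set_option maxHeartbeats 2000000


open MeasureTheory

/-- Dyadic decomposition estimate (Proposition for `T_{K⁰₄}`): if the amplitude `b` satisfies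
`|b| ≤ A`, `|b'| ≤ A λ⁻¹`, `|b''| ≤ A λ⁻²` on `(0,∞)`, then
`|∫₀^∞ e^{iλs} λ χ(λ) b(λ) dλ| ≤ C A (1+|s|)^{-3/2}`. -/
theorem stmt12 (χ : ℝ → ℝ) (hχ : ContDiff ℝ 2 χ)
    (hχsupp : Function.support χ ⊆ Set.Icc (-1) 1)
    (hχone : ∀ x ∈ Set.Icc (-(1:ℝ)/2) (1/2), χ x = 1)
    (hχbd : ∀ x : ℝ, 0 ≤ χ x ∧ χ x ≤ 1) :
    ∃ C > 0, ∀ A > 0, ∀ b : ℝ → ℂ, ContDiffOn ℝ 2 b (Set.Ioi 0) →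
      (∀ l : ℝ, 0 < l → ‖b l‖ ≤ A) →
      (∀ l : ℝ, 0 < l → ‖deriv b l‖ ≤ A / l) →
      (∀ l : ℝ, 0 < l → ‖deriv (deriv b) l‖ ≤ A / l ^ 2) →
      ∀ s : ℝ,
        ‖∫ l in Set.Ioi (0:ℝ),
            Complex.exp (Complex.I * (l : ℂ) * (s : ℂ)) * (l : ℂ) * (χ l : ℂ) * b l‖
          ≤ C * A / (1 + |s|) ^ ((3:ℝ)/2) := by
  classical
  -- smoothness of χ'
  have hχ1 : ContDiff ℝ 1 (deriv χ) := by
    have h : ContDiff ℝ (1+1 : ℕ) χ := by exact_mod_cast hχ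
    exact (contDiff_succ_iff_deriv.mp h).2.2
  -- bounds on χ', χ''
  obtain ⟨M₁, hM₁⟩ := (isCompact_Icc : IsCompact (Set.Icc (0:ℝ) 2)).exists_bound_of_continuousOn
      ((hχ.continuous_deriv (by norm_num)).continuousOn)
  obtain ⟨M₂, hM₂⟩ := (isCompact_Icc : IsCompact (Set.Icc (0:ℝ) 2)).exists_bound_of_continuousOn
      ((hχ1.continuous_deriv le_rfl).continuousOn)
  have hM₁0 : 0 ≤ M₁ := le_trans (norm_nonneg _) (hM₁ 0 ⟨le_rfl, by norm_num⟩)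
  have hM₂0 : 0 ≤ M₂ := le_trans (norm_nonneg _) (hM₂ 0 ⟨le_rfl, by norm_num⟩)
  set K₂ : ℝ := 8*M₁ + 4*M₂ + 3 with hK₂def
  have hK₂0 : 0 < K₂ := by simp only [hK₂def]; linarith
  refine ⟨4 * (4 + 2*M₁ + 3*K₂), by linarith, ?_⟩
  intro A hA b hb hb0 hb1 hb2 s
  set C : ℝ := 4 * (4 + 2*M₁ + 3*K₂) with hCdef
  have hC16 : (16:ℝ) ≤ C := by simp only [hCdef]; linarith
  -- vanishing of χ past 1
  have hχ0 : ∀ x : ℝ, 1 < x → χ x = 0 := by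
    intro x hx
    by_contra h
    exact absurd (hχsupp (Function.mem_support.mpr h)).2 (by linarith)
  have hdχ0 : ∀ x : ℝ, 1 < x → deriv χ x = 0 := by
    intro x hx
    have hev : χ =ᶠ[nhds x] (fun _ => (0:ℝ)) :=
      Filter.eventually_of_mem (isOpen_Ioi.mem_nhds hx) fun y hy => hχ0 y hy
    rw [hev.deriv_eq, deriv_const]
  -- the integrand
  set F : ℝ → ℂ := fun l =>
    Complex.exp (Complex.I * (l : ℂ) * (s : ℂ)) * (l : ℂ) * (χ l : ℂ) * b l with hFdef
  have hexp : ∀ l : ℝ, ‖Complex.exp (Complex.I * (l:ℂ) * (s:ℂ))‖ = 1 := by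
    intro l; simp [Complex.norm_exp]
  have hχabs : ∀ l : ℝ, |χ l| ≤ 1 := fun l => abs_le.mpr ⟨by linarith [(hχbd l).1], (hχbd l).2⟩
  have hFnorm : ∀ l : ℝ, 0 < l → ‖F l‖ ≤ l * A := by
    intro l hl
    have : ‖F l‖ = ‖Complex.exp (Complex.I * (l:ℂ) * (s:ℂ))‖ * |l| * |χ l| * ‖b l‖ := by
      simp [hFdef, norm_mul]
    rw [this, hexp l, one_mul, abs_of_pos hl]
    calc l * |χ l| * ‖b l‖ ≤ l * 1 * A := by
          gcongr
          · exact hχabs l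
          · exact hb0 l hl
      _ = l * A := by ring
  -- continuity of all the data on (0, ∞)
  have hbc : ContinuousOn b (Set.Ioi 0) := hb.continuousOn
  have hbd : DifferentiableOn ℝ b (Set.Ioi 0) := hb.differentiableOn (by norm_num)
  have hb'cd : ContDiffOn ℝ 1 (deriv b) (Set.Ioi 0) :=
    hb.deriv_of_isOpen isOpen_Ioi (by norm_num)
  have hb'c : ContinuousOn (deriv b) (Set.Ioi 0) := hb'cd.continuousOn
  have hb'd : DifferentiableOn ℝ (deriv b) (Set.Ioi 0) := hb'cd.differentiableOn (by norm_num)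
  have hb''c : ContinuousOn (deriv (deriv b)) (Set.Ioi 0) :=
    hb'cd.continuousOn_deriv_of_isOpen isOpen_Ioi le_rfl
  have hFc : ContinuousOn F (Set.Ioi 0) := by
    apply ContinuousOn.mul _ hbc
    apply ContinuousOn.mul
    apply ContinuousOn.mul
    · exact (Complex.continuous_exp.comp (by continuity)).continuousOn
    · exact Complex.continuous_ofReal.continuousOn
    · exact (Complex.continuous_ofReal.comp hχ.continuous).continuousOn
  -- integrability on (0,1]
  have hFm : AEStronglyMeasurable F (volume.restrict (Set.Ioc (0:ℝ) 1)) :=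
    (hFc.aestronglyMeasurable measurableSet_Ioi).mono_measure
      (Measure.restrict_mono Set.Ioc_subset_Ioi_self le_rfl)
  have hFint1 : IntegrableOn F (Set.Ioc (0:ℝ) 1) := by
    refine Integrable.mono' (integrable_const A) hFm ?_
    refine (ae_restrict_iff' measurableSet_Ioc).mpr (Filter.Eventually.of_forall ?_)
    intro x hx
    calc ‖F x‖ ≤ x * A := hFnorm x hx.1
      _ ≤ 1 * A := by gcongr; exact hx.2
      _ = A := one_mul A
  -- restrict the integral to (0,1]
  have hIoi_eq : ∫ l in Set.Ioi (0:ℝ), F l = ∫ l in Set.Ioc (0:ℝ) 1, F l := by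
    have hunion : Set.Ioc (0:ℝ) 1 ∪ Set.Ioi 1 = Set.Ioi 0 := Set.Ioc_union_Ioi_eq_Ioi (by norm_num)
    have hz : ∀ x ∈ Set.Ioi (1:ℝ), F x = 0 := by
      intro x hx
      simp [hFdef, hχ0 x hx]
    rw [← hunion, setIntegral_union Set.Ioc_disjoint_Ioi_same measurableSet_Ioi hFint1
      (IntegrableOn.congr_fun integrableOn_zero (fun x hx => (hz x hx).symm) measurableSet_Ioi),
      setIntegral_eq_zero_of_forall_eq_zero hz, add_zero]
  rw [hIoi_eq]
  rcases le_or_gt |s| 1 with hs | hs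
  · -- small |s| : trivial bound
    have h1 : ‖∫ l in Set.Ioc (0:ℝ) 1, F l‖ ≤ A * 1 := by
      have := norm_setIntegral_le_of_norm_le_const (s := Set.Ioc (0:ℝ) 1) (C := A)
        (by rw [Real.volume_Ioc]; exact ENNReal.ofReal_lt_top)
        (fun x hx => by
          calc ‖F x‖ ≤ x * A := hFnorm x hx.1
            _ ≤ 1 * A := by gcongr; exact hx.2
            _ = A := one_mul A)
      simpa using this
    rw [mul_one] at h1
    refine h1.trans ?_
    rw [le_div_iff₀ (by positivity)]
    have h2 : (1 + |s|) ^ ((3:ℝ)/2) ≤ 4 := by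
      calc (1 + |s|) ^ ((3:ℝ)/2) ≤ 2 ^ ((3:ℝ)/2) :=
            Real.rpow_le_rpow (by positivity) (by linarith) (by norm_num)
        _ ≤ 2 ^ (((2:ℕ)):ℝ) := by
            apply Real.rpow_le_rpow_left_iff (by norm_num : (1:ℝ) < 2) |>.mpr
            push_cast; norm_num
        _ = 4 := by rw [Real.rpow_natCast]; norm_num
    nlinarith
  · -- main case |s| > 1
    have hs0 : s ≠ 0 := by
      intro h; rw [h] at hs; simp at hs; linarith
    set S : ℝ := |s| with hSdef
    have hS1 : 1 < S := hs
    have hS0 : 0 < S := by linarith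
    set T : ℝ := S⁻¹ with hTdef
    have hT0 : 0 < T := by positivity
    have hT1 : T ≤ 1 := by rw [hTdef]; exact inv_le_one_of_one_le₀ hS1.le
    have hT2 : T ≤ 2 := by linarith
    have hTS : T * S = 1 := inv_mul_cancel₀ (ne_of_gt hS0)
    set Q : ℝ := Real.sqrt S with hQdef
    have hQ0 : 0 ≤ Q := Real.sqrt_nonneg S
    have hQ2 : Q * Q = S := Real.mul_self_sqrt hS0.le
    have hQ1 : 1 ≤ Q := by
      rw [hQdef, show (1:ℝ) = Real.sqrt 1 by simp]
      exact Real.sqrt_le_sqrt hS1.le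
    -- the amplitude and its derivatives
    set φ : ℝ → ℂ := fun l => (l:ℂ) * (χ l :ℂ) * b l with hφdef
    set φ₁ : ℝ → ℂ := fun l =>
      (χ l :ℂ) * b l + (l:ℂ)*((deriv χ l :ℝ):ℂ)*b l + (l:ℂ)*(χ l:ℂ)*deriv b l with hφ₁def
    set φ₂ : ℝ → ℂ := fun l => 2*((deriv χ l:ℝ):ℂ)*b l + 2*(χ l:ℂ)*deriv b l
      + (l:ℂ)*((deriv (deriv χ) l :ℝ):ℂ)*b l + 2*(l:ℂ)*((deriv χ l:ℝ):ℂ)*deriv b l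
      + (l:ℂ)*(χ l:ℂ)*deriv (deriv b) l with hφ₂def
    have hχdiff : Differentiable ℝ χ := hχ.differentiable (by norm_num)
    have hφd : ∀ x ∈ Set.Ioi (0:ℝ), HasDerivAt φ (φ₁ x) x := by
      intro x hx
      have hid : HasDerivAt (fun l : ℝ => (l:ℂ)) 1 x := by
        simpa using (hasDerivAt_id x).ofReal_comp
      have hχd : HasDerivAt (fun l : ℝ => ((χ l:ℝ) : ℂ)) ((deriv χ x : ℝ) : ℂ) x :=
        ((hχdiff x).hasDerivAt).ofReal_comp
      have hbd' : HasDerivAt b (deriv b x) x :=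
        (hbd.differentiableAt (isOpen_Ioi.mem_nhds hx)).hasDerivAt
      have h := (hid.mul hχd).mul hbd'
      exact h.congr_deriv (by simp only [hφ₁def, Pi.mul_apply]; ring)
    have hφ₁d : ∀ x ∈ Set.Ioi (0:ℝ), HasDerivAt φ₁ (φ₂ x) x := by
      intro x hx
      have hid : HasDerivAt (fun l : ℝ => (l:ℂ)) 1 x := by
        simpa using (hasDerivAt_id x).ofReal_comp
      have hχd : HasDerivAt (fun l : ℝ => ((χ l:ℝ) : ℂ)) ((deriv χ x : ℝ) : ℂ) x :=
        ((hχdiff x).hasDerivAt).ofReal_comp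
      have hχ'd : HasDerivAt (fun l : ℝ => ((deriv χ l:ℝ) : ℂ))
          ((deriv (deriv χ) x : ℝ) : ℂ) x :=
        (((hχ1.differentiable (by norm_num)) x).hasDerivAt).ofReal_comp
      have hbd' : HasDerivAt b (deriv b x) x :=
        (hbd.differentiableAt (isOpen_Ioi.mem_nhds hx)).hasDerivAt
      have hbd'' : HasDerivAt (deriv b) (deriv (deriv b) x) x :=
        (hb'd.differentiableAt (isOpen_Ioi.mem_nhds hx)).hasDerivAt
      have h := ((hχd.mul hbd').add (((hid.mul hχ'd).mul hbd').add ((hid.mul hχd).mul hbd'')))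
      have heq : φ₁ = fun l => ((χ l:ℝ):ℂ) * b l + (((l:ℂ)*((deriv χ l :ℝ):ℂ))*b l
          + ((l:ℂ)*((χ l:ℝ):ℂ))*deriv b l) := by
        rw [hφ₁def]; funext l; ring
      rw [heq]
      exact h.congr_deriv (by simp only [hφ₂def, Pi.mul_apply]; ring)
    have huIcc : Set.uIcc T 2 = Set.Icc T 2 := Set.uIcc_of_le hT2
    have hsub02 : Set.Icc T 2 ⊆ Set.Ioi (0:ℝ) := fun x hx => lt_of_lt_of_le hT0 hx.1
    -- the oscillating factor
    have hIs : (Complex.I * (s:ℂ)) ≠ 0 := by simp [Complex.ext_iff, hs0]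
    set v : ℝ → ℂ := fun l => Complex.exp (Complex.I * (l:ℂ) * (s:ℂ)) * (Complex.I * (s:ℂ))⁻¹
      with hvdef
    have hvd : ∀ x : ℝ, HasDerivAt v (Complex.exp (Complex.I * (x:ℂ) * (s:ℂ))) x := by
      intro x
      have h1 : HasDerivAt (fun l : ℝ => Complex.I * (l:ℂ) * (s:ℂ)) (Complex.I * s) x := by
        simpa using (((hasDerivAt_id x).ofReal_comp).const_mul Complex.I).mul_const (s:ℂ)
      have h3 := h1.cexp.mul_const ((Complex.I*(s:ℂ))⁻¹)
      rw [mul_inv_cancel_right₀ hIs] at h3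
      exact h3
    have hSinv : ‖(Complex.I * (s:ℂ))⁻¹‖ = S⁻¹ := by
      rw [norm_inv, norm_mul, Complex.norm_I, one_mul, Complex.norm_real, Real.norm_eq_abs]
    have hvnorm : ∀ x : ℝ, ‖v x‖ = S⁻¹ := by
      intro x
      simp only [hvdef]
      rw [norm_mul, hexp x, one_mul, hSinv]
    -- continuity and integrability
    have hφ₁c : ContinuousOn φ₁ (Set.Ioi 0) := fun x hx =>
      ((hφ₁d x hx).differentiableAt.continuousAt).continuousWithinAt
    have cR : Continuous (fun l:ℝ => (l:ℂ)) := Complex.continuous_ofReal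
    have cχ : Continuous (fun l:ℝ => ((χ l:ℝ):ℂ)) := Complex.continuous_ofReal.comp hχ.continuous
    have cχ' : Continuous (fun l:ℝ => ((deriv χ l:ℝ):ℂ)) :=
      Complex.continuous_ofReal.comp (hχ.continuous_deriv (by norm_num))
    have cχ'' : Continuous (fun l:ℝ => ((deriv (deriv χ) l:ℝ):ℂ)) :=
      Complex.continuous_ofReal.comp (hχ1.continuous_deriv le_rfl)
    have hφ₂c : ContinuousOn φ₂ (Set.Ioi 0) := by
      exact ((((continuous_const.mul cχ').continuousOn.mul hbc).add
        ((continuous_const.mul cχ).continuousOn.mul hb'c)).add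
        (((cR.mul cχ'').continuousOn).mul hbc)).add
        ((((continuous_const.mul cR).mul cχ').continuousOn).mul hb'c) |>.add
        (((cR.mul cχ).continuousOn).mul hb''c)
    have huIccsub : Set.uIcc T 2 ⊆ Set.Ioi (0:ℝ) := by rw [huIcc]; exact hsub02
    have hiφ₁ : IntervalIntegrable φ₁ volume T 2 :=
      (hφ₁c.mono huIccsub).intervalIntegrable
    have hiφ₂ : IntervalIntegrable φ₂ volume T 2 :=
      (hφ₂c.mono huIccsub).intervalIntegrable
    have hiexp : IntervalIntegrable (fun l:ℝ => Complex.exp (Complex.I*(l:ℂ)*(s:ℂ))) volume T 2 :=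
      (Complex.continuous_exp.comp (by continuity)).intervalIntegrable T 2
    -- integration by parts, twice
    have ibp1 := intervalIntegral.integral_mul_deriv_eq_deriv_mul
      (fun x hx => hφd x (huIccsub hx)) (fun x _ => hvd x) hiφ₁ hiexp
    have ibp2 := intervalIntegral.integral_mul_deriv_eq_deriv_mul
      (fun x hx => hφ₁d x (huIccsub hx)) (fun x _ => hvd x) hiφ₂ hiexp
    have hpull : ∀ g : ℝ → ℂ, (∫ x in T..(2:ℝ), g x * v x)
        = (Complex.I*(s:ℂ))⁻¹ * ∫ x in T..(2:ℝ), g x * Complex.exp (Complex.I*(x:ℂ)*(s:ℂ)) := by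
      intro g
      rw [← intervalIntegral.integral_const_mul]
      apply intervalIntegral.integral_congr
      intro x _
      simp only [hvdef]
      ring
    have hφ2z : φ 2 = 0 := by
      simp only [hφdef]
      rw [hχ0 2 (by norm_num)]
      simp
    have hφ₁2z : φ₁ 2 = 0 := by
      simp only [hφ₁def]
      rw [hχ0 2 (by norm_num), hdχ0 2 (by norm_num)]
      simp
    set J : ℂ := ∫ x in T..(2:ℝ), φ₂ x * Complex.exp (Complex.I*(x:ℂ)*(s:ℂ)) with hJdef
    have hkey : (∫ x in T..(2:ℝ), φ x * Complex.exp (Complex.I*(x:ℂ)*(s:ℂ)))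
        = -(φ T * v T) - (Complex.I*(s:ℂ))⁻¹ *
            (-(φ₁ T * v T) - (Complex.I*(s:ℂ))⁻¹ * J) := by
      rw [ibp1, hpull φ₁, ibp2, hpull φ₂, hφ2z, hφ₁2z, ← hJdef]
      ring
    -- boundary norms
    have hbT : ‖φ T‖ ≤ T * A := by
      simp only [hφdef]
      rw [norm_mul, norm_mul, Complex.norm_real, Complex.norm_real,
        Real.norm_eq_abs, Real.norm_eq_abs, abs_of_pos hT0]
      calc T * |χ T| * ‖b T‖ ≤ T * 1 * A := by
            gcongr
            · exact hχabs T
            · exact hb0 T hT0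
        _ = T * A := by ring
    have hnorm3 : ∀ (c : ℂ) (r : ℝ) (z : ℂ), ‖c * (r:ℂ) * z‖ = ‖c‖ * |r| * ‖z‖ := by
      intro c r z
      rw [norm_mul, norm_mul, Complex.norm_real, Real.norm_eq_abs]
    have hφ₁T : ‖φ₁ T‖ ≤ (2 + M₁) * A := by
      simp only [hφ₁def]
      have hcT : |χ T| ≤ 1 := hχabs T
      have hbTA : ‖b T‖ ≤ A := hb0 T hT0
      have hbT1 : ‖deriv b T‖ ≤ A / T := hb1 T hT0
      have hd1 : |deriv χ T| ≤ M₁ := by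
        have := hM₁ T ⟨hT0.le, by linarith⟩
        rwa [Real.norm_eq_abs] at this
      have e1 : ‖((χ T:ℝ):ℂ) * b T‖ ≤ 1 * A := by
        rw [norm_mul, Complex.norm_real, Real.norm_eq_abs]
        gcongr
      have e2 : ‖(T:ℂ)*((deriv χ T:ℝ):ℂ)*b T‖ ≤ M₁ * A := by
        rw [hnorm3, Complex.norm_real, Real.norm_eq_abs, abs_of_pos hT0]
        calc T * |deriv χ T| * ‖b T‖ ≤ 1 * M₁ * A := by gcongr
          _ = M₁ * A := by ring
      have e3 : ‖(T:ℂ)*((χ T:ℝ):ℂ)*deriv b T‖ ≤ A := by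
        rw [hnorm3, Complex.norm_real, Real.norm_eq_abs, abs_of_pos hT0]
        calc T * |χ T| * ‖deriv b T‖ ≤ T * 1 * (A / T) := by gcongr
          _ = A := by field_simp
      calc ‖((χ T:ℝ):ℂ) * b T + (T:ℂ)*((deriv χ T:ℝ):ℂ)*b T + (T:ℂ)*((χ T:ℝ):ℂ)*deriv b T‖
          ≤ ‖((χ T:ℝ):ℂ) * b T‖ + ‖(T:ℂ)*((deriv χ T:ℝ):ℂ)*b T‖
            + ‖(T:ℂ)*((χ T:ℝ):ℂ)*deriv b T‖ := norm_add₃_le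
        _ ≤ (2 + M₁) * A := by linarith
    -- the second-derivative integral
    have hφ₂bound : ∀ x ∈ Set.Ioc T 2, ‖φ₂ x‖ ≤ K₂ * A / x := by
      intro x hx
      have hx0 : 0 < x := lt_trans hT0 hx.1
      have hx2 : x ≤ 2 := hx.2
      have hbx := hb0 x hx0
      have hbx1 := hb1 x hx0
      have hbx2 := hb2 x hx0
      have hMx1 := hM₁ x ⟨hx0.le, hx2⟩
      have hMx2 := hM₂ x ⟨hx0.le, hx2⟩
      rw [Real.norm_eq_abs] at hMx1 hMx2
      have e1 : ‖(2:ℂ)*((deriv χ x:ℝ):ℂ)*b x‖ ≤ 2*M₁*A := by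
        rw [hnorm3]
        have : ‖(2:ℂ)‖ = 2 := by norm_num
        rw [this]
        gcongr
      have e2 : ‖(2:ℂ)*((χ x:ℝ):ℂ)*deriv b x‖ ≤ 2*(A/x) := by
        rw [hnorm3]
        have : ‖(2:ℂ)‖ = 2 := by norm_num
        rw [this]
        calc 2 * |χ x| * ‖deriv b x‖ ≤ 2 * 1 * (A/x) := by
              gcongr
              · exact hχabs x
          _ = 2*(A/x) := by ring
      have e3 : ‖(x:ℂ)*((deriv (deriv χ) x:ℝ):ℂ)*b x‖ ≤ 2*M₂*A := by
        rw [hnorm3, Complex.norm_real, Real.norm_eq_abs, abs_of_pos hx0]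
        calc x * |deriv (deriv χ) x| * ‖b x‖ ≤ 2 * M₂ * A := by gcongr
          _ = 2*M₂*A := by ring
      have e4 : ‖(2:ℂ)*(x:ℂ)*((deriv χ x:ℝ):ℂ)*deriv b x‖ ≤ 2*M₁*A := by
        rw [norm_mul, norm_mul, norm_mul, Complex.norm_real, Complex.norm_real,
          Real.norm_eq_abs, Real.norm_eq_abs, abs_of_pos hx0]
        have : ‖(2:ℂ)‖ = 2 := by norm_num
        rw [this]
        calc 2 * x * |deriv χ x| * ‖deriv b x‖ ≤ 2 * x * M₁ * (A/x) := by gcongr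
          _ = 2*M₁*A := by field_simp
      have e5 : ‖(x:ℂ)*((χ x:ℝ):ℂ)*deriv (deriv b) x‖ ≤ A/x := by
        rw [hnorm3, Complex.norm_real, Real.norm_eq_abs, abs_of_pos hx0]
        calc x * |χ x| * ‖deriv (deriv b) x‖ ≤ x * 1 * (A/x^2) := by
              gcongr
              · exact hχabs x
          _ = A/x := by field_simp
      have hle : ‖φ₂ x‖ ≤ 2*M₁*A + 2*(A/x) + 2*M₂*A + 2*M₁*A + A/x := by
        simp only [hφ₂def]
        calc ‖2*((deriv χ x:ℝ):ℂ)*b x + 2*((χ x:ℝ):ℂ)*deriv b x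
              + (x:ℂ)*((deriv (deriv χ) x:ℝ):ℂ)*b x + 2*(x:ℂ)*((deriv χ x:ℝ):ℂ)*deriv b x
              + (x:ℂ)*((χ x:ℝ):ℂ)*deriv (deriv b) x‖
            ≤ ‖2*((deriv χ x:ℝ):ℂ)*b x + 2*((χ x:ℝ):ℂ)*deriv b x
              + (x:ℂ)*((deriv (deriv χ) x:ℝ):ℂ)*b x + 2*(x:ℂ)*((deriv χ x:ℝ):ℂ)*deriv b x‖
              + ‖(x:ℂ)*((χ x:ℝ):ℂ)*deriv (deriv b) x‖ := norm_add_le _ _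
          _ ≤ ‖2*((deriv χ x:ℝ):ℂ)*b x + 2*((χ x:ℝ):ℂ)*deriv b x
              + (x:ℂ)*((deriv (deriv χ) x:ℝ):ℂ)*b x‖
              + ‖2*(x:ℂ)*((deriv χ x:ℝ):ℂ)*deriv b x‖
              + ‖(x:ℂ)*((χ x:ℝ):ℂ)*deriv (deriv b) x‖ := by
                gcongr; exact norm_add_le _ _
          _ ≤ ‖2*((deriv χ x:ℝ):ℂ)*b x‖ + ‖2*((χ x:ℝ):ℂ)*deriv b x‖
              + ‖(x:ℂ)*((deriv (deriv χ) x:ℝ):ℂ)*b x‖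
              + ‖2*(x:ℂ)*((deriv χ x:ℝ):ℂ)*deriv b x‖
              + ‖(x:ℂ)*((χ x:ℝ):ℂ)*deriv (deriv b) x‖ := by
                gcongr; exact norm_add₃_le
          _ ≤ 2*M₁*A + 2*(A/x) + 2*M₂*A + 2*M₁*A + A/x := by
                gcongr
      refine hle.trans ?_
      rw [hK₂def, le_div_iff₀ hx0]
      have hAx : A/x*x = A := div_mul_cancel₀ A (ne_of_gt hx0)
      have hh1 : (0:ℝ) ≤ (2 - x) * (M₁*A) :=
        mul_nonneg (by linarith) (mul_nonneg hM₁0 hA.le)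
      have hh2 : (0:ℝ) ≤ (2 - x) * (M₂*A) :=
        mul_nonneg (by linarith) (mul_nonneg hM₂0 hA.le)
      nlinarith [hh1, hh2, hAx]
    have hJle : ‖J‖ ≤ K₂ * A * Real.log (2 / T) := by
      have hg : IntervalIntegrable (fun x => K₂*A/x) volume T 2 := by
        apply ContinuousOn.intervalIntegrable
        apply ContinuousOn.div continuousOn_const continuousOn_id
        intro x hx
        exact ne_of_gt (lt_of_lt_of_le hT0 ((huIcc ▸ hx).1))
      have hae : ∀ᵐ t ∂(volume.restrict (Set.uIoc T 2)),
          ‖φ₂ t * Complex.exp (Complex.I*(t:ℂ)*(s:ℂ))‖ ≤ K₂*A/t := by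
        rw [Set.uIoc_of_le hT2]
        refine (ae_restrict_iff' measurableSet_Ioc).mpr (Filter.Eventually.of_forall ?_)
        intro x hx
        rw [norm_mul, hexp x, mul_one]
        exact hφ₂bound x hx
      have h := intervalIntegral.norm_integral_le_of_norm_le hT2
        (by rw [Set.uIoc_of_le hT2] at hae; exact (ae_restrict_iff' measurableSet_Ioc).mp hae) hg
      rw [hJdef]
      refine h.trans ?_
      have hint : (∫ x in T..(2:ℝ), K₂*A/x) = K₂*A*Real.log (2/T) := by
        have hco : (∫ x in T..(2:ℝ), K₂*A/x) = ∫ x in T..(2:ℝ), (K₂*A)*(1/x) :=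
          intervalIntegral.integral_congr fun x _ => by rw [mul_one_div]
        rw [hco, intervalIntegral.integral_const_mul, integral_one_div]
        intro hmem
        exact absurd ((huIcc ▸ hmem).1) (not_le.mpr hT0)
      rw [hint]
    have hlog : Real.log (2 / T) ≤ 3 * Q := by
      have h2T : 2 / T = 2 * S := by rw [hTdef]; field_simp
      have hlog2 : Real.log 2 ≤ 1 := by
        have := Real.log_le_sub_one_of_pos (by norm_num : (0:ℝ) < 2); linarith
      have hlogS : Real.log S ≤ 2 * Q := by
        have h := Real.log_le_sub_one_of_pos (Real.sqrt_pos.mpr hS0)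
        have h2 : Real.log S = 2 * Real.log (Real.sqrt S) := by
          rw [Real.log_sqrt hS0.le]; ring
        rw [h2, ← hQdef] at *
        nlinarith
      rw [h2T, Real.log_mul (by norm_num) (ne_of_gt hS0)]
      linarith
    have hJle3 : ‖J‖ ≤ K₂ * A * (3 * Q) :=
      hJle.trans (mul_le_mul_of_nonneg_left hlog (by positivity))
    -- splitting the integral over (0,1]
    have hFiT : IntegrableOn F (Set.Ioc 0 T) := hFint1.mono_set (Set.Ioc_subset_Ioc_right hT1)
    have hFiT1 : IntegrableOn F (Set.Ioc T 1) := hFint1.mono_set (Set.Ioc_subset_Ioc_left hT0.le)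
    have hsplit : (∫ l in Set.Ioc (0:ℝ) 1, F l)
        = (∫ l in Set.Ioc (0:ℝ) T, F l) + ∫ l in Set.Ioc T 1, F l := by
      rw [← setIntegral_union (Set.Ioc_disjoint_Ioc_of_le le_rfl) measurableSet_Ioc hFiT hFiT1,
        Set.Ioc_union_Ioc_eq_Ioc hT0.le hT1]
    have hlow : ‖∫ l in Set.Ioc (0:ℝ) T, F l‖ ≤ (T*A) * T := by
      have h := norm_setIntegral_le_of_norm_le_const (s := Set.Ioc (0:ℝ) T) (C := T*A)
        (by rw [Real.volume_Ioc]; exact ENNReal.ofReal_lt_top)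
        (fun x hx => (hFnorm x hx.1).trans (by gcongr; exact hx.2))
      calc ‖∫ l in Set.Ioc (0:ℝ) T, F l‖ ≤ (T*A) * (volume (Set.Ioc (0:ℝ) T)).toReal := h
        _ = (T*A) * T := by
            rw [Real.volume_Ioc, ENNReal.toReal_ofReal (by linarith)]
            ring_nf
    -- identify the upper piece with the interval integral
    have hTi1 : IntervalIntegrable F volume T 1 := by
      apply ContinuousOn.intervalIntegrable
      apply hFc.mono
      intro x hx
      rw [Set.uIcc_of_le hT1] at hx
      exact lt_of_lt_of_le hT0 hx.1
    have hTi2 : IntervalIntegrable F volume 1 2 := by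
      apply ContinuousOn.intervalIntegrable
      apply hFc.mono
      intro x hx
      rw [Set.uIcc_of_le (by norm_num : (1:ℝ) ≤ 2)] at hx
      exact lt_of_lt_of_le one_pos hx.1
    have hz12 : (∫ x in (1:ℝ)..2, F x) = 0 := by
      rw [intervalIntegral.integral_of_le one_le_two]
      apply setIntegral_eq_zero_of_forall_eq_zero
      intro x hx
      simp [hFdef, hχ0 x hx.1]
    have hcong : (∫ x in T..(2:ℝ), F x)
        = ∫ x in T..(2:ℝ), φ x * Complex.exp (Complex.I*(x:ℂ)*(s:ℂ)) := by
      apply intervalIntegral.integral_congr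
      intro x _
      simp only [hFdef, hφdef]
      ring
    have hIocT1 : (∫ l in Set.Ioc T 1, F l)
        = ∫ x in T..(2:ℝ), φ x * Complex.exp (Complex.I*(x:ℂ)*(s:ℂ)) := by
      calc (∫ l in Set.Ioc T 1, F l) = ∫ x in T..(1:ℝ), F x :=
            (intervalIntegral.integral_of_le hT1).symm
        _ = (∫ x in T..(1:ℝ), F x) + ∫ x in (1:ℝ)..2, F x := by rw [hz12, add_zero]
        _ = ∫ x in T..(2:ℝ), F x := intervalIntegral.integral_add_adjacent_intervals hTi1 hTi2
        _ = _ := hcong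
    -- norm bound on the upper piece
    have hhigh : ‖∫ l in Set.Ioc T 1, F l‖
        ≤ T*A*S⁻¹ + S⁻¹ * ((2+M₁)*A*S⁻¹ + S⁻¹*(K₂*A*(3*Q))) := by
      rw [hIocT1, hkey]
      have hX : ‖-(φ₁ T * v T) - (Complex.I*(s:ℂ))⁻¹ * J‖
          ≤ (2+M₁)*A*S⁻¹ + S⁻¹*(K₂*A*(3*Q)) := by
        have hS0' : (0:ℝ) ≤ S⁻¹ := by positivity
        calc ‖-(φ₁ T * v T) - (Complex.I*(s:ℂ))⁻¹ * J‖
            ≤ ‖-(φ₁ T * v T)‖ + ‖(Complex.I*(s:ℂ))⁻¹ * J‖ := norm_sub_le _ _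
          _ = ‖φ₁ T‖ * ‖v T‖ + ‖(Complex.I*(s:ℂ))⁻¹‖ * ‖J‖ := by
              rw [norm_neg, norm_mul (φ₁ T) (v T), norm_mul ((Complex.I*(s:ℂ))⁻¹) J]
          _ ≤ ((2+M₁)*A) * S⁻¹ + S⁻¹ * (K₂*A*(3*Q)) := by
              rw [hvnorm T, hSinv]
              have h1 := hφ₁T
              have h2 := hJle3
              gcongr
          _ = (2+M₁)*A*S⁻¹ + S⁻¹*(K₂*A*(3*Q)) := by ring
      calc ‖-(φ T * v T) - (Complex.I*(s:ℂ))⁻¹ *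
              (-(φ₁ T * v T) - (Complex.I*(s:ℂ))⁻¹ * J)‖
          ≤ ‖-(φ T * v T)‖ + ‖(Complex.I*(s:ℂ))⁻¹ *
              (-(φ₁ T * v T) - (Complex.I*(s:ℂ))⁻¹ * J)‖ := norm_sub_le _ _
        _ = ‖φ T‖ * ‖v T‖ + ‖(Complex.I*(s:ℂ))⁻¹‖ *
              ‖-(φ₁ T * v T) - (Complex.I*(s:ℂ))⁻¹ * J‖ := by
            rw [norm_neg, norm_mul (φ T) (v T),
              norm_mul ((Complex.I*(s:ℂ))⁻¹) (-(φ₁ T * v T) - (Complex.I*(s:ℂ))⁻¹ * J)]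
        _ ≤ (T*A) * S⁻¹ + S⁻¹ * ((2+M₁)*A*S⁻¹ + S⁻¹*(K₂*A*(3*Q))) := by
            rw [hvnorm T, hSinv]
            have h1 := hbT
            have h2 := hX
            have hS0' : (0:ℝ) ≤ S⁻¹ := by positivity
            gcongr
        _ = T*A*S⁻¹ + S⁻¹ * ((2+M₁)*A*S⁻¹ + S⁻¹*(K₂*A*(3*Q))) := by ring
    -- put everything together
    have habs : |s| = S := rfl
    rw [hsplit]
    have hPpos : (0:ℝ) < (1 + S) ^ ((3:ℝ)/2) := by positivity
    have hP : (1 + S) ^ ((3:ℝ)/2) ≤ 4 * (S * Q) := by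
      have e1 : (1:ℝ) + S ≤ 2*S := by linarith
      have e2 : (1 + S) ^ ((3:ℝ)/2) ≤ (2*S) ^ ((3:ℝ)/2) :=
        Real.rpow_le_rpow (by positivity) e1 (by norm_num)
      have e3 : ((2:ℝ)*S) ^ ((3:ℝ)/2) = 2 ^ ((3:ℝ)/2) * S ^ ((3:ℝ)/2) :=
        Real.mul_rpow (by norm_num) hS0.le
      have e4 : (2:ℝ) ^ ((3:ℝ)/2) ≤ 4 := by
        calc (2:ℝ) ^ ((3:ℝ)/2) ≤ 2 ^ (((2:ℕ)):ℝ) := by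
              apply Real.rpow_le_rpow_left_iff (by norm_num : (1:ℝ) < 2) |>.mpr
              push_cast; norm_num
          _ = 4 := by rw [Real.rpow_natCast]; norm_num
      have e5 : S ^ ((3:ℝ)/2) = S * Q := by
        rw [show (3:ℝ)/2 = 1 + 1/2 by norm_num, Real.rpow_add hS0, Real.rpow_one,
          hQdef, Real.sqrt_eq_rpow]
      calc (1 + S) ^ ((3:ℝ)/2) ≤ 2 ^ ((3:ℝ)/2) * S ^ ((3:ℝ)/2) := e2.trans_eq e3
        _ ≤ 4 * S ^ ((3:ℝ)/2) := by
            apply mul_le_mul_of_nonneg_right e4 (by positivity)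
        _ = 4 * (S * Q) := by rw [e5]
    calc ‖(∫ l in Set.Ioc (0:ℝ) T, F l) + ∫ l in Set.Ioc T 1, F l‖
        ≤ ‖∫ l in Set.Ioc (0:ℝ) T, F l‖ + ‖∫ l in Set.Ioc T 1, F l‖ := norm_add_le _ _
      _ ≤ (T*A)*T + (T*A*S⁻¹ + S⁻¹ * ((2+M₁)*A*S⁻¹ + S⁻¹*(K₂*A*(3*Q)))) :=
          add_le_add hlow hhigh
      _ = ((4+M₁) + 3*K₂*Q)*A*(S⁻¹*S⁻¹) := by rw [hTdef]; ring
      _ ≤ C * A / (1 + S) ^ ((3:ℝ)/2) := by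
          rw [le_div_iff₀ hPpos]
          have hcoef0 : (0:ℝ) ≤ (4+M₁) + 3*K₂*Q := by nlinarith
          have hLHS0 : (0:ℝ) ≤ ((4+M₁) + 3*K₂*Q)*A*(S⁻¹*S⁻¹) := by
            apply mul_nonneg (mul_nonneg hcoef0 hA.le) (by positivity)
          have step1 : ((4+M₁) + 3*K₂*Q)*A*(S⁻¹*S⁻¹) * ((1 + S) ^ ((3:ℝ)/2))
              ≤ ((4+M₁) + 3*K₂*Q)*A*(S⁻¹*S⁻¹) * (4*(S*Q)) :=
            mul_le_mul_of_nonneg_left hP hLHS0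
          refine step1.trans ?_
          have huS : S⁻¹ * S = 1 := inv_mul_cancel₀ (ne_of_gt hS0)
          have huQ : S⁻¹ * Q ≤ 1 := by
            have hQS : Q ≤ S := by nlinarith
            calc S⁻¹ * Q ≤ S⁻¹ * S := by gcongr
              _ = 1 := huS
          have key1 : S⁻¹*S⁻¹*S*Q ≤ 1 := by
            calc S⁻¹*S⁻¹*S*Q = (S⁻¹*S)*(S⁻¹*Q) := by ring
              _ = S⁻¹*Q := by rw [huS, one_mul]
              _ ≤ 1 := huQ
          have key2 : S⁻¹*S⁻¹*S*(Q*Q) = 1 := by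
            rw [hQ2]
            calc S⁻¹*S⁻¹*S*S = (S⁻¹*S)*(S⁻¹*S) := by ring
              _ = 1 := by rw [huS]; ring
          have expand : ((4+M₁) + 3*K₂*Q)*A*(S⁻¹*S⁻¹) * (4*(S*Q))
              = (4*(4+M₁)*A)*(S⁻¹*S⁻¹*S*Q) + (12*K₂*A)*(S⁻¹*S⁻¹*S*(Q*Q)) := by ring
          rw [expand, key2, mul_one]
          have hb1' : (4*(4+M₁)*A)*(S⁻¹*S⁻¹*S*Q) ≤ (4*(4+M₁)*A) * 1 :=
            mul_le_mul_of_nonneg_left key1 (by positivity)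
          rw [hCdef, hK₂def]
          nlinarith [hb1', mul_nonneg hM₁0 hA.le, mul_nonneg hM₂0 hA.le]
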